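/- Under the rank-one reconstruction w = (h^H W̃ h)^{-1/2}·W̃ h and R₀ = R̃₀ + W̃ − w·w^H, if the relaxed solution satisfies tr(W̃ h h^H) ≥ γ₀·tr(R̃₀ h h^H) + γ₀σ², then the reconstructed solution satisfies |h^H w|² ≥ γ₀·(h^H R₀ h + σ²), i.e., the SINR constraint is preserved. -/

import Mathlib

open Matrix ComplexOrder

/-- The rank-one reconstruction preserves the communication SINR constraint. -/
theorem stmt4 (n : ℕ) (hn : 0 < n) (h : Fin n → ℂ) (γ₀ σ2 : ℝ)
    (hγ : 0 < γ₀) (hσ : 0 < σ2)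
    (Wt Rt : Matrix (Fin n) (Fin n) ℂ) (hWt : Wt.PosSemidef) (hRt : Rt.PosSemidef)
    (hpos : 0 < (star h ⬝ᵥ Wt.mulVec h).re)
    (w : Fin n → ℂ)
    (hw : w = ((Real.sqrt (star h ⬝ᵥ Wt.mulVec h).re)⁻¹ : ℂ) • Wt.mulVec h)
    (R₀ : Matrix (Fin n) (Fin n) ℂ)
    (hR₀ : R₀ = Rt + Wt - vecMulVec w (star w))
    (hrelax : ((Wt * vecMulVec h (star h)).trace).re ≥
      γ₀ * ((Rt * vecMulVec h (star h)).trace).re + γ₀ * σ2) :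
    ‖star h ⬝ᵥ w‖ ^ 2 ≥ γ₀ * ((star h ⬝ᵥ R₀.mulVec h).re + σ2) := by
  set a := (star h ⬝ᵥ Wt.mulVec h).re with ha_def
  have ha : 0 < a := hpos
  -- the quadratic form of Wt is a nonnegative real
  have hWnn : 0 ≤ star h ⬝ᵥ Wt.mulVec h := hWt.dotProduct_mulVec_nonneg h
  have hWre : star h ⬝ᵥ Wt.mulVec h = (a : ℂ) := by
    rw [Complex.nonneg_iff] at hWnn
    apply Complex.ext
    · simp [ha_def]
    · simp [hWnn.2]
  -- trace identity
  have htr : ∀ M : Matrix (Fin n) (Fin n) ℂ,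
      (M * vecMulVec h (star h)).trace = star h ⬝ᵥ M.mulVec h := by
    intro M
    simp only [Matrix.trace, Matrix.diag, Matrix.mul_apply, vecMulVec_apply,
      dotProduct, mulVec, Finset.mul_sum]
    apply Finset.sum_congr rfl
    intro i _
    apply Finset.sum_congr rfl
    intro j _
    ring
  -- value of h^H w
  have ht : star h ⬝ᵥ w = (((Real.sqrt a)⁻¹ * a : ℝ) : ℂ) := by
    rw [hw, dotProduct_smul, hWre, smul_eq_mul]
    push_cast
    ring
  have hsq : ((Real.sqrt a)⁻¹ * a) ^ 2 = a := by
    have h1 : (Real.sqrt a) ^ 2 = a := Real.sq_sqrt ha.le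
    rw [mul_pow, inv_pow, h1]
    field_simp
  have hnorm : ‖star h ⬝ᵥ w‖ ^ 2 = a := by
    rw [ht, Complex.norm_real, Real.norm_eq_abs, sq_abs, hsq]
  -- quadratic form of the rank-one matrix
  have hww : star h ⬝ᵥ (vecMulVec w (star w)).mulVec h = (a : ℂ) := by
    have key : star h ⬝ᵥ (vecMulVec w (star w)).mulVec h
        = (star h ⬝ᵥ w) * (star w ⬝ᵥ h) := by
      simp only [dotProduct, mulVec, vecMulVec_apply, Finset.mul_sum, Finset.sum_mul]
      rw [Finset.sum_comm]
      apply Finset.sum_congr rfl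
      intro i _
      apply Finset.sum_congr rfl
      intro j _
      simp [Pi.star_apply]
      ring
    have hconj : star w ⬝ᵥ h = (((Real.sqrt a)⁻¹ * a : ℝ) : ℂ) := by
      rw [star_dotProduct, ht]
      simp
    rw [key, ht, hconj]
    norm_cast
    linear_combination hsq
  -- quadratic form of R₀
  have hR : star h ⬝ᵥ R₀.mulVec h = star h ⬝ᵥ Rt.mulVec h := by
    rw [hR₀, sub_mulVec, add_mulVec, dotProduct_sub, dotProduct_add, hww, hWre]
    ring
  rw [hnorm, hR]
  rw [htr Wt, htr Rt] at hrelax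
  rw [← ha_def] at hrelax
  nlinarith [hrelax]
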